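/- Fix integers n ≥ 1 and 0 ≤ k ≤ n−1 and a strictly decreasing function X₀ : {1,…,n} → ℤ. Then there exists exactly one function h : {0,…,k} × ℤ → ℝ such that: (i) 2·h(l, z−1) − h(l, z) = h(l+1, z) for all 0 ≤ l < k and all z ∈ ℤ; (ii) h(k, z) = 2^{z − X₀(n−k)} for all z ∈ ℤ; and (iii) h(l, X₀(n−l)) = 0 for all 0 ≤ l < k. -/

import Mathlib

noncomputable def antid (g : ℤ → ℝ) (a z : ℤ) : ℝ :=
  (∑ j ∈ Finset.Ioc a z, g j) - ∑ j ∈ Finset.Ioc z a, g j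

lemma antid_self (g : ℤ → ℝ) (a : ℤ) : antid g a a = 0 := by simp [antid]

lemma Ioc_pred (z : ℤ) : Finset.Ioc (z - 1) z = {z} := by
  ext x; simp; omega

lemma sum_Ioc_consec (g : ℤ → ℝ) {a b c : ℤ} (h1 : a ≤ b) (h2 : b ≤ c) :
    (∑ j ∈ Finset.Ioc a b, g j) + ∑ j ∈ Finset.Ioc b c, g j = ∑ j ∈ Finset.Ioc a c, g j := by
  have hd : Disjoint (Finset.Ioc a b) (Finset.Ioc b c) := by
    rw [Finset.disjoint_left]
    intro x hx hx'
    simp only [Finset.mem_Ioc] at hx hx'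
    omega
  rw [← Finset.sum_union hd, Finset.Ioc_union_Ioc_eq_Ioc h1 h2]

lemma antid_step (g : ℤ → ℝ) (a z : ℤ) :
    antid g a z - antid g a (z - 1) = g z := by
  rcases le_or_gt z a with h | h
  · have h1 : Finset.Ioc a z = ∅ := by rw [Finset.Ioc_eq_empty_iff]; omega
    have h2 : Finset.Ioc a (z - 1) = ∅ := by rw [Finset.Ioc_eq_empty_iff]; omega
    have h3 := sum_Ioc_consec g (by omega : z - 1 ≤ z) h
    rw [Ioc_pred, Finset.sum_singleton] at h3
    simp only [antid, h1, h2, Finset.sum_empty]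
    linarith
  · have h1 : Finset.Ioc z a = ∅ := by rw [Finset.Ioc_eq_empty_iff]; omega
    have h2 : Finset.Ioc (z - 1) a = ∅ := by rw [Finset.Ioc_eq_empty_iff]; omega
    have h3 := sum_Ioc_consec g (by omega : a ≤ z - 1) (by omega : z - 1 ≤ z)
    rw [Ioc_pred, Finset.sum_singleton] at h3
    simp only [antid, h1, h2, Finset.sum_empty]
    linarith

noncomputable def solveF (f : ℤ → ℝ) (a : ℤ) (z : ℤ) : ℝ :=
  (2 : ℝ) ^ z * antid (fun j => -f j / (2 : ℝ) ^ j) a z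

lemma solveF_self (f : ℤ → ℝ) (a : ℤ) : solveF f a a = 0 := by
  simp [solveF, antid_self]

lemma two_zpow_ne (z : ℤ) : ((2 : ℝ) ^ z) ≠ 0 := zpow_ne_zero z two_ne_zero

lemma solveF_eq (f : ℤ → ℝ) (a : ℤ) (z : ℤ) :
    2 * solveF f a (z - 1) - solveF f a z = f z := by
  have h1 : (2 : ℝ) * (2 : ℝ) ^ (z - 1) = (2 : ℝ) ^ z := by
    rw [zpow_sub₀ (two_ne_zero), zpow_one]
    field_simp
  have h2 := antid_step (fun j => -f j / (2 : ℝ) ^ j) a z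
  have h2' : antid (fun j => -f j / (2:ℝ)^j) a (z - 1)
      - antid (fun j => -f j / (2:ℝ)^j) a z = f z / (2:ℝ)^z := by
    have : -(-f z / (2:ℝ)^z) = f z / (2:ℝ)^z := by ring
    rw [← this, ← h2]; ring
  simp only [solveF]
  rw [← mul_assoc, h1, ← mul_sub, h2', mul_div_cancel₀ _ (two_zpow_ne z)]

lemma solveF_uniq (f : ℤ → ℝ) (a : ℤ) (u : ℤ → ℝ)
    (hu : ∀ z, 2 * u (z - 1) - u z = f z) (h0 : u a = 0) :
    ∀ z, u z = solveF f a z := by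
  set d : ℤ → ℝ := fun z => u z - solveF f a z with hd
  have hstep : ∀ z, d z = 2 * d (z - 1) := by
    intro z
    have := hu z
    have := solveF_eq f a z
    simp only [hd]
    linarith
  have hda : d a = 0 := by simp [hd, h0, solveF_self]
  have key : ∀ m : ℕ, d (a + m) = 0 ∧ d (a - m) = 0 := by
    intro m
    induction m with
    | zero => refine ⟨?_, ?_⟩ <;> simpa using hda
    | succ m ih =>
      constructor
      · have := hstep (a + (m + 1 : ℕ))
        have e : (a + (m + 1 : ℕ)) - 1 = a + m := by push_cast; ring
        rw [e, ih.1] at this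
        simpa using this
      · have := hstep (a - (m : ℕ))
        have e : (a - (m : ℕ)) - 1 = a - (m + 1 : ℕ) := by push_cast; ring
        rw [e, ih.2] at this
        have : d (a - ((m : ℕ) + 1 : ℕ)) = 0 := by push_cast at this ⊢; linarith
        simpa using this
  intro z
  have hz : d z = 0 := by
    rcases le_or_gt a z with h | h
    · have e : z = a + ((z - a).toNat : ℕ) := by omega
      rw [e]; exact (key _).1
    · have e : z = a - ((a - z).toNat : ℕ) := by omega
      rw [e]; exact (key _).2
  simp only [hd] at hz
  linarith

noncomputable def Haux (n k : ℕ) (X₀ : ℕ → ℤ) : ℕ → ℤ → ℝ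
  | 0 => fun z => (2 : ℝ) ^ (z - X₀ (n - k))
  | (j + 1) => solveF (Haux n k X₀ j) (X₀ (n - (k - (j + 1))))

/-- Existence and uniqueness of the solution `h = h^n_k` of the initial–boundary
value problem for the backwards heat equation:
(i) `2·h(l, z−1) − h(l, z) = h(l+1, z)` for `0 ≤ l < k`;
(ii) `h(k, z) = 2^{z − X₀(n−k)}`;
(iii) `h(l, X₀(n−l)) = 0` for `0 ≤ l < k`;
with `X₀(1) > X₀(2) > … > X₀(n)` the initial particle positions. -/
theorem statement13 (n k : ℕ) (hn : 1 ≤ n) (hk : k ≤ n - 1) (X₀ : ℕ → ℤ)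
    (hX : ∀ i j : ℕ, 1 ≤ i → i < j → j ≤ n → X₀ j < X₀ i) :
    ∃ h : ℕ → ℤ → ℝ,
      ((∀ l, l < k → ∀ z : ℤ, 2 * h l (z - 1) - h l z = h (l + 1) z) ∧
       (∀ z : ℤ, h k z = (2 : ℝ) ^ (z - X₀ (n - k))) ∧
       (∀ l, l < k → h l (X₀ (n - l)) = 0)) ∧
      ∀ h' : ℕ → ℤ → ℝ,
        ((∀ l, l < k → ∀ z : ℤ, 2 * h' l (z - 1) - h' l z = h' (l + 1) z) ∧
         (∀ z : ℤ, h' k z = (2 : ℝ) ^ (z - X₀ (n - k))) ∧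
         (∀ l, l < k → h' l (X₀ (n - l)) = 0)) →
        ∀ l, l ≤ k → ∀ z : ℤ, h' l z = h l z := by
  refine ⟨fun l => Haux n k X₀ (k - l), ⟨?_, ?_, ?_⟩, ?_⟩
  · intro l hl z
    have e1 : k - l = (k - (l + 1)) + 1 := by omega
    have e2 : k - ((k - (l + 1)) + 1) = l := by omega
    show 2 * Haux n k X₀ (k - l) (z - 1) - Haux n k X₀ (k - l) z
        = Haux n k X₀ (k - (l + 1)) z
    rw [e1]
    show 2 * Haux n k X₀ ((k - (l+1)) + 1) (z - 1) - Haux n k X₀ ((k - (l+1)) + 1) z = _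
    rw [show Haux n k X₀ ((k - (l+1)) + 1)
        = solveF (Haux n k X₀ (k - (l + 1))) (X₀ (n - (k - ((k - (l+1)) + 1)))) from rfl, e2]
    exact solveF_eq _ _ z
  · intro z
    show Haux n k X₀ (k - k) z = _
    rw [Nat.sub_self]
    rfl
  · intro l hl
    have e1 : k - l = (k - (l + 1)) + 1 := by omega
    have e2 : k - ((k - (l + 1)) + 1) = l := by omega
    show Haux n k X₀ (k - l) (X₀ (n - l)) = 0
    rw [e1]
    show solveF (Haux n k X₀ (k - (l + 1))) (X₀ (n - (k - ((k - (l+1)) + 1)))) _ = 0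
    rw [e2]
    exact solveF_self _ _
  · rintro h' ⟨h'1, h'2, h'3⟩ l hl z
    have claim : ∀ j, j ≤ k → ∀ z : ℤ, h' (k - j) z = Haux n k X₀ j z := by
      intro j
      induction j with
      | zero => intro _ z; simpa [Haux] using h'2 z
      | succ j ih =>
        intro hj z
        have hjk : j ≤ k := by omega
        have hlk : k - (j + 1) < k := by omega
        have e : (k - (j + 1)) + 1 = k - j := by omega
        have heq : ∀ z : ℤ, 2 * h' (k - (j+1)) (z - 1) - h' (k - (j+1)) z
            = Haux n k X₀ j z := by
          intro z
          rw [← ih hjk z, ← e]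
          exact h'1 _ hlk z
        have hb : h' (k - (j + 1)) (X₀ (n - (k - (j + 1)))) = 0 := h'3 _ hlk
        exact solveF_uniq (Haux n k X₀ j) (X₀ (n - (k - (j + 1)))) _ heq hb z
    have e : k - (k - l) = l := by omega
    have := claim (k - l) (by omega) z
    rwa [e] at this
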